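/- Let g ≥ 0 and 0 ≤ r ≤ g be integers. Let A be a real g×g matrix of block form A = [[A₀, 0],[0, 0]] with A₀ a positive definite r×r block, and let Z be a real g×g matrix with block decomposition Z = [[Z_{r,r}, Z_{r,g−r}],[Z_{g−r,r}, Z_{g−r,g−r}]] such that the (g−r)×(g−r) block Z_{g−r,g−r} is positive definite. Set V = Vor(A₀) × Vor(Z_{g−r,g−r}) ⊆ ℝ^r × ℝ^{g−r} = ℝ^g. Then: (1) V is a fundamental domain for ℤ^g in ℝ^g, i.e. every element of ℝ^g is congruent modulo ℤ^g to an element of V and no two distinct interior points of V are congruent modulo ℤ^g; (2) I_V(A) = I(A₀); and (3) I_V(Z) = I_{Vor(A₀)}(Z_{r,r}) + I(Z_{g−r,g−r}). -/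

import Mathlib

open Matrix MeasureTheory

/-- The Voronoi region of a real square matrix `Z` indexed by a finite type `ι`:
`Vor(Z) = {β ∈ ℝ^ι : nᵀZβ ≤ ½ nᵀZn for all n ∈ ℤ^ι}`. -/
def VorMatrix {ι : Type*} [Fintype ι] (Z : Matrix ι ι ℝ) : Set (ι → ℝ) :=
  {β | ∀ n : ι → ℤ,
    (fun i => (n i : ℝ)) ⬝ᵥ Z.mulVec β ≤
      (1 / 2) * ((fun i => (n i : ℝ)) ⬝ᵥ Z.mulVec (fun i => (n i : ℝ)))}

/-- `I_V(Z) = ∫_V βᵀZβ dβ` for a set `V ⊆ ℝ^ι` and a real square matrix `Z`,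
with respect to the standard Lebesgue measure. -/
noncomputable def momentOn {ι : Type*} [Fintype ι] (V : Set (ι → ℝ)) (Z : Matrix ι ι ℝ) : ℝ :=
  ∫ β in V, β ⬝ᵥ Z.mulVec β

set_option linter.unusedVariables false

namespace VorAux
variable {ι : Type*} [Fintype ι]

/-- integer cast vector -/
def icast (n : ι → ℤ) : ι → ℝ := fun i => (n i : ℝ)

lemma icast_add (n m : ι → ℤ) : icast (n + m) = icast n + icast m := by
  funext i; simp [icast]

lemma icast_neg (n : ι → ℤ) : icast (-n) = - icast n := by funext i; simp [icast]

lemma icast_ne_zero {n : ι → ℤ} (hn : n ≠ 0) : icast n ≠ 0 := by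
  intro h
  apply hn
  funext i
  have := congrFun h i
  simpa [icast] using this

lemma dot_symm {M : Matrix ι ι ℝ} (hM : M.IsHermitian) (x y : ι → ℝ) :
    x ⬝ᵥ M.mulVec y = y ⬝ᵥ M.mulVec x := by
  have hMt : Mᵀ = M := by
    simpa [Matrix.conjTranspose_eq_transpose_of_trivial] using hM.eq
  rw [Matrix.dotProduct_mulVec, ← Matrix.mulVec_transpose, hMt, dotProduct_comm]

lemma quad_expand {M : Matrix ι ι ℝ} (hM : M.IsHermitian) (x y : ι → ℝ) :
    (x - y) ⬝ᵥ M.mulVec (x - y) =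
      x ⬝ᵥ M.mulVec x - 2 * (y ⬝ᵥ M.mulVec x) + y ⬝ᵥ M.mulVec y := by
  rw [Matrix.mulVec_sub, sub_dotProduct, dotProduct_sub, dotProduct_sub,
    dot_symm hM x y]
  ring

lemma cont_dot (M : Matrix ι ι ℝ) (a : ι → ℝ) :
    Continuous fun β : ι → ℝ => a ⬝ᵥ M.mulVec β := by
  simp only [dotProduct, Matrix.mulVec]
  exact continuous_finset_sum _ fun i _ => continuous_const.mul
    (continuous_finset_sum _ fun j _ => continuous_const.mul (continuous_apply j))

lemma cont_quad (M : Matrix ι ι ℝ) :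
    Continuous fun β : ι → ℝ => β ⬝ᵥ M.mulVec β := by
  simp only [dotProduct, Matrix.mulVec]
  exact continuous_finset_sum _ fun i _ => (continuous_apply i).mul
    (continuous_finset_sum _ fun j _ => continuous_const.mul (continuous_apply j))





lemma quad_smul (M : Matrix ι ι ℝ) (t : ℝ) (v : ι → ℝ) :
    (t • v) ⬝ᵥ M.mulVec (t • v) = t ^ 2 * (v ⬝ᵥ M.mulVec v) := by
  rw [Matrix.mulVec_smul, smul_dotProduct, dotProduct_smul]
  simp [smul_eq_mul]; ring

lemma posdef_coercive {M : Matrix ι ι ℝ} (hM : M.PosDef) :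
    ∃ c > 0, ∀ v : ι → ℝ, c * ‖v‖ ^ 2 ≤ v ⬝ᵥ M.mulVec v := by
  cases isEmpty_or_nonempty ι with
  | inl h =>
    refine ⟨1, one_pos, fun v => ?_⟩
    have hv : v = 0 := Subsingleton.elim _ _
    simp [hv, dotProduct]
  | inr h =>
    have hsc : IsCompact (Metric.sphere (0 : ι → ℝ) 1) := isCompact_sphere _ _
    have hsne : (Metric.sphere (0 : ι → ℝ) 1).Nonempty := by
      rw [NormedSpace.sphere_nonempty]; norm_num
    obtain ⟨v₀, hv₀mem, hv₀min⟩ := hsc.exists_isMinOn hsne (cont_quad M).continuousOn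
    have hv₀norm : ‖v₀‖ = 1 := by simpa using hv₀mem
    have hv₀ne : v₀ ≠ 0 := by intro h; rw [h] at hv₀norm; simp at hv₀norm
    have hc : 0 < v₀ ⬝ᵥ M.mulVec v₀ := by simpa using hM.dotProduct_mulVec_pos hv₀ne
    refine ⟨_, hc, fun v => ?_⟩
    rcases eq_or_ne v 0 with rfl | hv
    · simp [dotProduct]
    · have hnv : 0 < ‖v‖ := norm_pos_iff.2 hv
      have humem : ‖v‖⁻¹ • v ∈ Metric.sphere (0 : ι → ℝ) 1 := by
        simp [norm_smul, abs_of_pos (inv_pos.2 hnv), inv_mul_cancel₀ hnv.ne']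
      have : v₀ ⬝ᵥ M.mulVec v₀ ≤ (‖v‖⁻¹ • v) ⬝ᵥ M.mulVec (‖v‖⁻¹ • v) :=
        isMinOn_iff.1 hv₀min _ humem
      have hexp : v ⬝ᵥ M.mulVec v = ‖v‖ ^ 2 * ((‖v‖⁻¹ • v) ⬝ᵥ M.mulVec (‖v‖⁻¹ • v)) := by
        rw [quad_smul]
        field_simp
      rw [hexp, mul_comm]
      exact mul_le_mul_of_nonneg_left this (by positivity)

lemma quad_upper (M : Matrix ι ι ℝ) (v : ι → ℝ) :
    v ⬝ᵥ M.mulVec v ≤ (∑ i, ∑ j, |M i j|) * ‖v‖ ^ 2 := by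
  have h1 : v ⬝ᵥ M.mulVec v = ∑ i, ∑ j, v i * (M i j * v j) := by
    simp only [dotProduct, Matrix.mulVec, Finset.mul_sum]
  rw [h1, Finset.sum_mul]
  refine Finset.sum_le_sum fun i _ => ?_
  rw [Finset.sum_mul]
  refine Finset.sum_le_sum fun j _ => ?_
  calc v i * (M i j * v j) ≤ |v i * (M i j * v j)| := le_abs_self _
    _ = |v i| * |M i j| * |v j| := by rw [abs_mul, abs_mul]; ring
    _ ≤ ‖v‖ * |M i j| * ‖v‖ := by
        have h2 : |v i| ≤ ‖v‖ := by
          simpa [Real.norm_eq_abs] using norm_le_pi_norm v i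
        have h3 : |v j| ≤ ‖v‖ := by
          simpa [Real.norm_eq_abs] using norm_le_pi_norm v j
        exact mul_le_mul (mul_le_mul h2 le_rfl (abs_nonneg _) (norm_nonneg _)) h3
          (abs_nonneg _) (by positivity)
    _ = |M i j| * ‖v‖ ^ 2 := by ring


lemma mem_vor_iff {M : Matrix ι ι ℝ} {β : ι → ℝ} :
    β ∈ VorMatrix M ↔ ∀ n : ι → ℤ,
      icast n ⬝ᵥ M.mulVec β ≤ (1 / 2) * (icast n ⬝ᵥ M.mulVec (icast n)) := Iff.rfl

lemma exists_sub_mem_vor {M : Matrix ι ι ℝ} (hM : M.PosDef) (x : ι → ℝ) :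
    ∃ n : ι → ℤ, x - icast n ∈ VorMatrix M := by
  obtain ⟨c, hc, hcoer⟩ := posdef_coercive hM
  set F : (ι → ℤ) → ℝ := fun n => (x - icast n) ⬝ᵥ M.mulVec (x - icast n) with hF
  set T : Set (ι → ℤ) := {n | F n ≤ F 0} with hT
  have hT0 : (0 : ι → ℤ) ∈ T := by
    simp only [hT, Set.mem_setOf_eq, le_refl]
  set R : ℝ := Real.sqrt (F 0 / c) with hR
  set B : ℤ := ⌈‖x‖ + R⌉ with hB
  have hTsub : T ⊆ Set.pi Set.univ fun _ : ι => Set.Icc (-B) B := by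
    intro n hn i _
    have h1 : c * ‖x - icast n‖ ^ 2 ≤ F 0 := le_trans (hcoer _) hn
    have hF0 : 0 ≤ F 0 :=
      le_trans (by positivity : (0:ℝ) ≤ c * ‖x - icast 0‖ ^ 2) (hcoer _)
    have h2 : ‖x - icast n‖ ≤ R := by
      rw [hR, Real.le_sqrt (norm_nonneg _) (div_nonneg hF0 hc.le)]
      rw [le_div_iff₀ hc, mul_comm]
      exact h1
    have h3 : |(n i : ℝ)| ≤ ‖x‖ + R := by
      have h4 : |x i - (n i : ℝ)| ≤ ‖x - icast n‖ := by
        simpa [Real.norm_eq_abs, icast] using norm_le_pi_norm (x - icast n) i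
      have h5 : |x i| ≤ ‖x‖ := by
        simpa [Real.norm_eq_abs] using norm_le_pi_norm x i
      calc |(n i : ℝ)| = |x i - (x i - (n i : ℝ))| := by ring_nf
        _ ≤ |x i| + |x i - (n i : ℝ)| := abs_sub _ _
        _ ≤ ‖x‖ + R := add_le_add h5 (le_trans h4 h2)
    have h6 : ((|n i| : ℤ) : ℝ) ≤ (B : ℝ) := by
      rw [Int.cast_abs]
      exact le_trans h3 (Int.le_ceil _)
    have h7 : |n i| ≤ B := by exact_mod_cast h6
    exact abs_le.1 h7
  have hTfin : T.Finite :=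
    Set.Finite.subset (Set.Finite.pi fun _ => Set.finite_Icc _ _) hTsub
  obtain ⟨n₀, hn₀T, hmin⟩ := Set.exists_min_image T F hTfin ⟨0, hT0⟩
  have hglobal : ∀ n, F n₀ ≤ F n := by
    intro n
    by_cases hn : n ∈ T
    · exact hmin n hn
    · exact le_trans (hmin 0 hT0) (le_of_lt (not_le.1 hn))
  refine ⟨n₀, fun m => ?_⟩
  have hkey := hglobal (n₀ + m)
  have hsplit : x - icast (n₀ + m) = (x - icast n₀) - icast m := by
    rw [icast_add]; abel
  have hexp : F (n₀ + m) = F n₀ - 2 * (icast m ⬝ᵥ M.mulVec (x - icast n₀))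
      + icast m ⬝ᵥ M.mulVec (icast m) := by
    rw [hF]
    simp only
    rw [hsplit, quad_expand hM.1]
  show icast m ⬝ᵥ M.mulVec (x - icast n₀) ≤
    (1 / 2) * (icast m ⬝ᵥ M.mulVec (icast m))
  rw [hexp] at hkey
  linarith

lemma vor_isClosed (M : Matrix ι ι ℝ) : IsClosed (VorMatrix M) := by
  have : VorMatrix M = ⋂ n : ι → ℤ, {β : ι → ℝ |
      icast n ⬝ᵥ M.mulVec β ≤ (1 / 2) * (icast n ⬝ᵥ M.mulVec (icast n))} := by
    ext β; simp [VorMatrix, icast, Set.mem_iInter]; rfl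
  rw [this]
  exact isClosed_iInter fun n => isClosed_le (cont_dot M _) continuous_const

lemma vor_isCompact {M : Matrix ι ι ℝ} (hM : M.PosDef) : IsCompact (VorMatrix M) := by
  obtain ⟨c, hc, hcoer⟩ := posdef_coercive hM
  set C : ℝ := ∑ i, ∑ j, |M i j| with hC
  have hC0 : 0 ≤ C := Finset.sum_nonneg fun i _ => Finset.sum_nonneg fun j _ => abs_nonneg _
  refine Metric.isCompact_of_isClosed_isBounded (vor_isClosed M) ?_
  rw [Metric.isBounded_iff_subset_closedBall 0]
  refine ⟨Real.sqrt (C / (4 * c)), fun β hβ => ?_⟩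
  set n : ι → ℤ := fun i => round (β i) with hn
  have hnorm : ‖β - icast n‖ ≤ 1 / 2 := by
    rw [pi_norm_le_iff_of_nonneg (by norm_num)]
    intro i
    simpa [Real.norm_eq_abs, icast, hn] using abs_sub_round (β i)
  have h1 : β ⬝ᵥ M.mulVec β ≤ (β - icast n) ⬝ᵥ M.mulVec (β - icast n) := by
    have hvor : icast n ⬝ᵥ M.mulVec β ≤ (1 / 2) * (icast n ⬝ᵥ M.mulVec (icast n)) := hβ n
    have hexp := quad_expand hM.1 β (icast n)
    nlinarith [hvor, hexp]
  have h2 : (β - icast n) ⬝ᵥ M.mulVec (β - icast n) ≤ C * (1 / 2) ^ 2 := by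
    refine le_trans (quad_upper M _) ?_
    have : ‖β - icast n‖ ^ 2 ≤ (1 / 2) ^ 2 :=
      pow_le_pow_left₀ (norm_nonneg _) hnorm 2
    exact mul_le_mul_of_nonneg_left this hC0
  have h3 : c * ‖β‖ ^ 2 ≤ C * (1 / 2) ^ 2 := le_trans (hcoer β) (le_trans h1 h2)
  rw [Metric.mem_closedBall, dist_zero_right]
  rw [Real.le_sqrt (norm_nonneg _) (by positivity)]
  rw [le_div_iff₀ (by positivity)]
  nlinarith

lemma vor_convex (M : Matrix ι ι ℝ) : Convex ℝ (VorMatrix M) := by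
  have : VorMatrix M = ⋂ n : ι → ℤ, {β : ι → ℝ |
      icast n ⬝ᵥ M.mulVec β ≤ (1 / 2) * (icast n ⬝ᵥ M.mulVec (icast n))} := by
    ext β; simp only [Set.mem_iInter]; rfl
  rw [this]
  refine convex_iInter fun n => ?_
  refine convex_halfSpace_le ?_ _
  constructor
  · intro a b; rw [Matrix.mulVec_add, dotProduct_add]
  · intro t a
    rw [Matrix.mulVec_smul, dotProduct_smul, smul_eq_mul]

lemma vor_neg_mem {M : Matrix ι ι ℝ} {β : ι → ℝ} (hβ : β ∈ VorMatrix M) :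
    -β ∈ VorMatrix M := by
  intro n
  have h := hβ (-n)
  have h1 : icast (-n) ⬝ᵥ M.mulVec β ≤
      (1 / 2) * (icast (-n) ⬝ᵥ M.mulVec (icast (-n))) := h
  rw [icast_neg] at h1
  simp only [neg_dotProduct, Matrix.mulVec_neg, dotProduct_neg, neg_neg] at h1
  show icast n ⬝ᵥ M.mulVec (-β) ≤ (1 / 2) * (icast n ⬝ᵥ M.mulVec (icast n))
  rw [Matrix.mulVec_neg, dotProduct_neg]
  linarith

lemma vor_interior_strict {M : Matrix ι ι ℝ} (hM : M.PosDef) {w : ι → ℝ}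
    (hw : w ∈ interior (VorMatrix M)) {n : ι → ℤ} (hn : n ≠ 0) :
    icast n ⬝ᵥ M.mulVec w < (1 / 2) * (icast n ⬝ᵥ M.mulVec (icast n)) := by
  have hmem : w ∈ VorMatrix M := interior_subset hw
  have hle : icast n ⬝ᵥ M.mulVec w ≤ (1 / 2) * (icast n ⬝ᵥ M.mulVec (icast n)) := hmem n
  rcases lt_or_eq_of_le hle with h | h
  · exact h
  exfalso
  obtain ⟨ε, hε, hball⟩ := Metric.mem_nhds_iff.1 (mem_interior_iff_mem_nhds.1 hw)
  have hQ : 0 < icast n ⬝ᵥ M.mulVec (icast n) := by simpa using hM.dotProduct_mulVec_pos (icast_ne_zero hn)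
  set δ : ℝ := ε / (2 * (‖icast n‖ + 1)) with hδ
  have hδpos : 0 < δ := by positivity
  have hmem2 : w + δ • icast n ∈ VorMatrix M := by
    apply hball
    rw [Metric.mem_ball, dist_eq_norm]
    have : ‖w + δ • icast n - w‖ = δ * ‖icast n‖ := by
      rw [add_sub_cancel_left, norm_smul, Real.norm_eq_abs, abs_of_pos hδpos]
    rw [this, hδ]
    rw [div_mul_eq_mul_div, div_lt_iff₀ (by positivity)]
    nlinarith [norm_nonneg (icast n)]
  have h2 := hmem2 n
  have h3 : icast n ⬝ᵥ M.mulVec (w + δ • icast n) ≤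
      (1 / 2) * (icast n ⬝ᵥ M.mulVec (icast n)) := h2
  rw [Matrix.mulVec_add, dotProduct_add, Matrix.mulVec_smul,
    dotProduct_smul, smul_eq_mul] at h3
  nlinarith

section Volume
variable [DecidableEq ι]

lemma mem_span_basisFun_iff {v : ι → ℝ} :
    v ∈ Submodule.span ℤ (Set.range ⇑(Pi.basisFun ℝ ι)) ↔ ∃ n : ι → ℤ, icast n = v := by
  rw [Submodule.mem_span_range_iff_exists_fun]
  refine exists_congr fun n => ?_
  constructor
  · intro h
    rw [← h]
    funext j
    simp [Pi.basisFun_apply, icast, Finset.sum_apply, Pi.single_apply]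
  · intro h
    rw [← h]
    funext j
    simp [Pi.basisFun_apply, icast, Finset.sum_apply, Pi.single_apply]

lemma hyperplane_volume_zero (a : ι → ℝ) (ha : a ≠ 0) (t : ℝ) :
    volume {β : ι → ℝ | a ⬝ᵥ β = t} = 0 := by
  obtain ⟨i, hi⟩ : ∃ i, a i ≠ 0 := by
    by_contra h; push_neg at h; exact ha (funext h)
  set f : (ι → ℝ) →ₗ[ℝ] ℝ :=
    { toFun := fun β => a ⬝ᵥ β
      map_add' := fun x y => dotProduct_add a x y
      map_smul' := fun t x => by
        simp [dotProduct_smul, smul_eq_mul] } with hf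
  set β₀ : ι → ℝ := (t / a i) • (Pi.single i (1:ℝ) : ι → ℝ) with hβ₀
  have hfβ₀ : f β₀ = t := by
    simp only [hf, hβ₀, LinearMap.coe_mk, AddHom.coe_mk, dotProduct_smul, smul_eq_mul,
      dotProduct_single, mul_one]
    field_simp
  have hset : {β : ι → ℝ | a ⬝ᵥ β = t} =
      ↑(AffineSubspace.mk' β₀ (LinearMap.ker f)) := by
    ext β
    rw [Set.mem_setOf_eq, SetLike.mem_coe, AffineSubspace.mem_mk',
      LinearMap.mem_ker, vsub_eq_sub, map_sub, hfβ₀, sub_eq_zero]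
    exact Iff.rfl
  rw [hset]
  refine Measure.addHaar_affineSubspace volume _ fun htop => ?_
  have hmem : β₀ + Pi.single i 1 ∈ AffineSubspace.mk' β₀ (LinearMap.ker f) := by
    rw [htop]; trivial
  rw [AffineSubspace.mem_mk', vsub_eq_sub, add_sub_cancel_left,
    LinearMap.mem_ker] at hmem
  have : f (Pi.single i 1) = a i := by
    simp [hf, dotProduct_single]
  rw [this] at hmem
  exact hi hmem

lemma vor_isAddFundamentalDomain {M : Matrix ι ι ℝ} (hM : M.PosDef) :
    IsAddFundamentalDomain (Submodule.span ℤ (Set.range ⇑(Pi.basisFun ℝ ι))).toAddSubgroup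
      (VorMatrix M) volume := by
  constructor
  · exact (vor_isClosed M).measurableSet.nullMeasurableSet
  · refine Filter.Eventually.of_forall fun x => ?_
    obtain ⟨n, hn⟩ := exists_sub_mem_vor hM x
    refine ⟨⟨icast (-n), mem_span_basisFun_iff.2 ⟨-n, rfl⟩⟩, ?_⟩
    show icast (-n) + x ∈ VorMatrix M
    rw [icast_neg]
    convert hn using 1
    abel
  · intro g g' hne
    have hd : (↑g' - ↑g : ι → ℝ) ∈ Submodule.span ℤ (Set.range ⇑(Pi.basisFun ℝ ι)) :=
      Submodule.sub_mem _ g'.2 g.2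
    obtain ⟨m, hm⟩ := mem_span_basisFun_iff.1 hd
    have hdne : (↑g' - ↑g : ι → ℝ) ≠ 0 := by
      intro h
      exact hne (Subtype.ext (sub_eq_zero.mp h)).symm
    have hmne : m ≠ 0 := by
      intro h0
      apply hdne
      rw [← hm, h0]
      funext j; simp [icast]
    have hQpos : 0 < icast m ⬝ᵥ M.mulVec (icast m) := by simpa using hM.dotProduct_mulVec_pos (icast_ne_zero hmne)
    have hane : M.mulVec (icast m) ≠ 0 := by
      intro h0
      rw [dotProduct_comm] at hQpos
      rw [h0] at hQpos
      simp at hQpos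
    refine measure_mono_null (fun β hβ => ?_)
      (hyperplane_volume_zero (M.mulVec (icast m)) hane
        ((1 / 2) * (icast m ⬝ᵥ M.mulVec (icast m)) + icast m ⬝ᵥ M.mulVec ↑g))
    obtain ⟨hβ1, hβ2⟩ := hβ
    rw [Set.mem_vadd_set_iff_neg_vadd_mem] at hβ1 hβ2
    have hu : -↑g + β ∈ VorMatrix M := hβ1
    have hu' : -↑g' + β ∈ VorMatrix M := hβ2
    set u : ι → ℝ := β - ↑g with hudef
    have huu : -(↑g : ι → ℝ) + β = u := by rw [hudef]; abel
    have huu' : -(↑g' : ι → ℝ) + β = u - icast m := by rw [hudef, hm]; abel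
    rw [huu] at hu
    rw [huu'] at hu'
    have h1 : icast m ⬝ᵥ M.mulVec u ≤
        (1 / 2) * (icast m ⬝ᵥ M.mulVec (icast m)) := hu m
    have h2' : icast (-m) ⬝ᵥ M.mulVec (u - icast m) ≤
        (1 / 2) * (icast (-m) ⬝ᵥ M.mulVec (icast (-m))) := hu' (-m)
    rw [icast_neg] at h2'
    simp only [neg_dotProduct, Matrix.mulVec_neg, dotProduct_neg, neg_neg,
      Matrix.mulVec_sub, dotProduct_sub] at h2'
    have heq : icast m ⬝ᵥ M.mulVec u = (1 / 2) * (icast m ⬝ᵥ M.mulVec (icast m)) := by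
      linarith
    show M.mulVec (icast m) ⬝ᵥ β =
      (1 / 2) * (icast m ⬝ᵥ M.mulVec (icast m)) + icast m ⬝ᵥ M.mulVec ↑g
    have hswap : icast m ⬝ᵥ M.mulVec β = M.mulVec (icast m) ⬝ᵥ β := by
      rw [dot_symm hM.1, dotProduct_comm]
    have hsplit2 : icast m ⬝ᵥ M.mulVec u =
        icast m ⬝ᵥ M.mulVec β - icast m ⬝ᵥ M.mulVec ↑g := by
      rw [hudef, Matrix.mulVec_sub, dotProduct_sub]
    rw [← hswap]
    linarith

lemma vor_volume {M : Matrix ι ι ℝ} (hM : M.PosDef) : volume (VorMatrix M) = 1 := by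
  have : Countable (Submodule.span ℤ (Set.range ⇑(Pi.basisFun ℝ ι))).toAddSubgroup :=
    inferInstanceAs (Countable (Submodule.span ℤ (Set.range ⇑(Pi.basisFun ℝ ι))))
  have h1 := (vor_isAddFundamentalDomain hM).measure_eq
    (ZSpan.isAddFundamentalDomain' (Pi.basisFun ℝ ι) volume)
  rw [h1, ZSpan.fundamentalDomain_pi_basisFun, volume_pi, Measure.pi_pi]
  simp [Real.volume_Ico]
end Volume

lemma setIntegral_odd_zero {V : Set (ι → ℝ)} (hVm : MeasurableSet V)
    (hVs : ∀ x ∈ V, -x ∈ V) (f : (ι → ℝ) → ℝ) (hf : ∀ x, f (-x) = - f x) :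
    ∫ x in V, f x = 0 := by
  have hsym : ∀ x : ι → ℝ, -x ∈ V ↔ x ∈ V :=
    fun x => ⟨fun h => by simpa using hVs _ h, hVs x⟩
  have h1 : ∫ x in V, f x = ∫ x, V.indicator f x := (integral_indicator hVm).symm
  have h2 : ∫ x, V.indicator f x = ∫ x, V.indicator f (-x) :=
    (integral_neg_eq_self (V.indicator f) volume).symm
  have h3 : ∀ x, V.indicator f (-x) = - V.indicator f x := by
    intro x
    by_cases hx : x ∈ V
    · rw [Set.indicator_of_mem hx, Set.indicator_of_mem ((hsym x).2 hx), hf]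
    · rw [Set.indicator_of_notMem hx,
        Set.indicator_of_notMem (fun h => hx ((hsym x).1 h)), neg_zero]
  have h4 : ∫ x, V.indicator f x = - ∫ x, V.indicator f x := by
    conv_lhs => rw [h2]
    simp_rw [h3]
    exact integral_neg _
  rw [h1]
  linarith

lemma cont_dot2 {ι₁ ι₂ : Type*} [Fintype ι₁] [Fintype ι₂] (M : Matrix ι₁ ι₂ ℝ) :
    Continuous fun p : (ι₁ → ℝ) × (ι₂ → ℝ) => p.1 ⬝ᵥ M.mulVec p.2 := by
  simp only [dotProduct, Matrix.mulVec]
  exact continuous_finset_sum _ fun i _ => ((continuous_apply i).comp continuous_fst).mul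
    (continuous_finset_sum _ fun j _ =>
      continuous_const.mul ((continuous_apply j).comp continuous_snd))

lemma quad_block {ι₁ ι₂ : Type*} [Fintype ι₁] [Fintype ι₂]
    (Z : Matrix (ι₁ ⊕ ι₂) (ι₁ ⊕ ι₂) ℝ) (x : ι₁ → ℝ) (y : ι₂ → ℝ) :
    (Sum.elim x y) ⬝ᵥ Z.mulVec (Sum.elim x y) =
      x ⬝ᵥ Z.toBlocks₁₁.mulVec x + x ⬝ᵥ Z.toBlocks₁₂.mulVec y
        + y ⬝ᵥ Z.toBlocks₂₁.mulVec x + y ⬝ᵥ Z.toBlocks₂₂.mulVec y := by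
  conv_lhs => rw [← Matrix.fromBlocks_toBlocks Z]
  rw [Matrix.fromBlocks_mulVec, sumElim_dotProduct_sumElim,
    dotProduct_add, dotProduct_add, Sum.elim_comp_inl, Sum.elim_comp_inr]
  ring

lemma momentOn_prod {ι₁ ι₂ : Type*} [Fintype ι₁] [Fintype ι₂]
    (V₁ : Set (ι₁ → ℝ)) (V₂ : Set (ι₂ → ℝ))
    (h₁c : IsCompact V₁) (h₂c : IsCompact V₂)
    (h₁m : MeasurableSet V₁) (h₂m : MeasurableSet V₂)
    (h₁s : ∀ x ∈ V₁, -x ∈ V₁) (h₂s : ∀ x ∈ V₂, -x ∈ V₂)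
    (h₁v : volume V₁ = 1) (h₂v : volume V₂ = 1)
    (Z : Matrix (ι₁ ⊕ ι₂) (ι₁ ⊕ ι₂) ℝ) :
    momentOn {β : ι₁ ⊕ ι₂ → ℝ | (β ∘ Sum.inl) ∈ V₁ ∧ (β ∘ Sum.inr) ∈ V₂} Z =
      momentOn V₁ Z.toBlocks₁₁ + momentOn V₂ Z.toBlocks₂₂ := by
  classical
  set e := MeasurableEquiv.sumPiEquivProdPi (fun _ : ι₁ ⊕ ι₂ => ℝ) with he
  have hmp : MeasurePreserving e volume volume :=
    volume_measurePreserving_sumPiEquivProdPi _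
  have hesymm : ∀ (x : ι₁ → ℝ) (y : ι₂ → ℝ), e.symm (x, y) = Sum.elim x y := by
    intro x y
    funext i
    cases i <;> rfl
  have hS : {β : ι₁ ⊕ ι₂ → ℝ | (β ∘ Sum.inl) ∈ V₁ ∧ (β ∘ Sum.inr) ∈ V₂} =
      e ⁻¹' (V₁ ×ˢ V₂) := by
    ext β
    simp only [Set.mem_setOf_eq, Set.mem_preimage, Set.mem_prod]
    exact Iff.rfl
  have hcompact : IsCompact (V₁ ×ˢ V₂) := h₁c.prod h₂c
  set F : ((ι₁ → ℝ) × (ι₂ → ℝ)) → ℝ := fun p => (e.symm p) ⬝ᵥ Z.mulVec (e.symm p) with hF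
  have htrans : momentOn {β : ι₁ ⊕ ι₂ → ℝ | (β ∘ Sum.inl) ∈ V₁ ∧ (β ∘ Sum.inr) ∈ V₂} Z =
      ∫ p in V₁ ×ˢ V₂, F p := by
    rw [momentOn, hS]
    rw [← hmp.setIntegral_preimage_emb e.measurableEmbedding F (V₁ ×ˢ V₂)]
    refine setIntegral_congr_fun (e.measurable (h₁m.prod h₂m)) fun β _ => ?_
    simp only [hF, MeasurableEquiv.symm_apply_apply]
  set f1 : ((ι₁ → ℝ) × (ι₂ → ℝ)) → ℝ := fun p => p.1 ⬝ᵥ Z.toBlocks₁₁.mulVec p.1 with hf1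
  set f2 : ((ι₁ → ℝ) × (ι₂ → ℝ)) → ℝ := fun p => p.1 ⬝ᵥ Z.toBlocks₁₂.mulVec p.2 with hf2
  set f3 : ((ι₁ → ℝ) × (ι₂ → ℝ)) → ℝ := fun p => p.2 ⬝ᵥ Z.toBlocks₂₁.mulVec p.1 with hf3
  set f4 : ((ι₁ → ℝ) × (ι₂ → ℝ)) → ℝ := fun p => p.2 ⬝ᵥ Z.toBlocks₂₂.mulVec p.2 with hf4
  have hFeq : ∀ p, F p = f1 p + f2 p + f3 p + f4 p := by
    rintro ⟨x, y⟩
    simp only [hF, hf1, hf2, hf3, hf4, hesymm]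
    exact quad_block Z x y
  have hc1 : Continuous f1 :=
    (cont_dot2 Z.toBlocks₁₁).comp (continuous_fst.prodMk continuous_fst)
  have hc2 : Continuous f2 := cont_dot2 Z.toBlocks₁₂
  have hc3 : Continuous f3 :=
    (cont_dot2 Z.toBlocks₂₁).comp (continuous_snd.prodMk continuous_fst)
  have hc4 : Continuous f4 :=
    (cont_dot2 Z.toBlocks₂₂).comp (continuous_snd.prodMk continuous_snd)
  have hi1 : IntegrableOn f1 (V₁ ×ˢ V₂) volume :=
    hc1.continuousOn.integrableOn_compact hcompact
  have hi2 : IntegrableOn f2 (V₁ ×ˢ V₂) volume :=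
    hc2.continuousOn.integrableOn_compact hcompact
  have hi3 : IntegrableOn f3 (V₁ ×ˢ V₂) volume :=
    hc3.continuousOn.integrableOn_compact hcompact
  have hi4 : IntegrableOn f4 (V₁ ×ˢ V₂) volume :=
    hc4.continuousOn.integrableOn_compact hcompact
  have hi12 : IntegrableOn (fun p => f1 p + f2 p) (V₁ ×ˢ V₂) volume := hi1.add hi2
  have hi123 : IntegrableOn (fun p => f1 p + f2 p + f3 p) (V₁ ×ˢ V₂) volume := hi12.add hi3
  have hsplit : ∫ p in V₁ ×ˢ V₂, F p =
      (∫ p in V₁ ×ˢ V₂, f1 p) + (∫ p in V₁ ×ˢ V₂, f2 p)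
        + (∫ p in V₁ ×ˢ V₂, f3 p) + (∫ p in V₁ ×ˢ V₂, f4 p) := by
    rw [show (fun p => F p) = fun p => f1 p + f2 p + f3 p + f4 p from funext hFeq]
    rw [integral_add hi123 hi4, integral_add hi12 hi3, integral_add hi1 hi2]
  have h2vr : (volume V₂).toReal = 1 := by rw [h₂v]; simp
  have h1vr : (volume V₁).toReal = 1 := by rw [h₁v]; simp
  have hT1 : ∫ p in V₁ ×ˢ V₂, f1 p = momentOn V₁ Z.toBlocks₁₁ := by
    rw [Measure.volume_eq_prod, setIntegral_prod _ (by rwa [← Measure.volume_eq_prod])]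
    rw [momentOn]
    refine setIntegral_congr_fun h₁m fun x _ => ?_
    show ∫ _ in V₂, x ⬝ᵥ Z.toBlocks₁₁.mulVec x ∂volume = x ⬝ᵥ Z.toBlocks₁₁.mulVec x
    rw [setIntegral_const, measureReal_def, h2vr, one_smul]
  have hT2 : ∫ p in V₁ ×ˢ V₂, f2 p = 0 := by
    rw [Measure.volume_eq_prod, setIntegral_prod _ (by rwa [← Measure.volume_eq_prod])]
    have hz : (fun x : ι₁ → ℝ => ∫ y in V₂, f2 (x, y) ∂volume) = fun _ => (0:ℝ) :=
      funext fun x => setIntegral_odd_zero h₂m h₂s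
        (fun y => x ⬝ᵥ Z.toBlocks₁₂.mulVec y)
        (fun y => by simp [Matrix.mulVec_neg])
    rw [hz, integral_zero]
  have hT3 : ∫ p in V₁ ×ˢ V₂, f3 p = 0 := by
    rw [Measure.volume_eq_prod, setIntegral_prod _ (by rwa [← Measure.volume_eq_prod])]
    have hz : (fun x : ι₁ → ℝ => ∫ y in V₂, f3 (x, y) ∂volume) = fun _ => (0:ℝ) :=
      funext fun x => setIntegral_odd_zero h₂m h₂s
        (fun y => y ⬝ᵥ Z.toBlocks₂₁.mulVec x)
        (fun y => by simp [neg_dotProduct])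
    rw [hz, integral_zero]
  have hT4 : ∫ p in V₁ ×ˢ V₂, f4 p = momentOn V₂ Z.toBlocks₂₂ := by
    rw [Measure.volume_eq_prod, setIntegral_prod _ (by rwa [← Measure.volume_eq_prod])]
    have hz : (fun x : ι₁ → ℝ => ∫ y in V₂, f4 (x, y) ∂volume) =
        fun _ => momentOn V₂ Z.toBlocks₂₂ := funext fun x => rfl
    rw [hz, setIntegral_const, measureReal_def, h1vr, one_smul]
  rw [htrans, hsplit, hT1, hT2, hT3, hT4]
  ring

lemma interior_prod_proj {ι₁ ι₂ : Type*} [Fintype ι₁] [Fintype ι₂]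
    {V₁ : Set (ι₁ → ℝ)} {V₂ : Set (ι₂ → ℝ)} {w : ι₁ ⊕ ι₂ → ℝ}
    (hw : w ∈ interior {β : ι₁ ⊕ ι₂ → ℝ | (β ∘ Sum.inl) ∈ V₁ ∧ (β ∘ Sum.inr) ∈ V₂}) :
    (w ∘ Sum.inl) ∈ interior V₁ ∧ (w ∘ Sum.inr) ∈ interior V₂ := by
  obtain ⟨ε, hε, hball⟩ := Metric.mem_nhds_iff.1 (mem_interior_iff_mem_nhds.1 hw)
  constructor
  · rw [mem_interior_iff_mem_nhds, Metric.mem_nhds_iff]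
    refine ⟨ε, hε, fun y hy => ?_⟩
    have hmem : Sum.elim y (w ∘ Sum.inr) ∈
        {β : ι₁ ⊕ ι₂ → ℝ | (β ∘ Sum.inl) ∈ V₁ ∧ (β ∘ Sum.inr) ∈ V₂} := by
      apply hball
      rw [Metric.mem_ball, dist_pi_lt_iff hε]
      intro i
      cases i with
      | inl a =>
        exact lt_of_le_of_lt (dist_le_pi_dist y (w ∘ Sum.inl) a) hy
      | inr b => simpa using hε
    have := hmem.1
    rwa [Sum.elim_comp_inl] at this
  · rw [mem_interior_iff_mem_nhds, Metric.mem_nhds_iff]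
    refine ⟨ε, hε, fun y hy => ?_⟩
    have hmem : Sum.elim (w ∘ Sum.inl) y ∈
        {β : ι₁ ⊕ ι₂ → ℝ | (β ∘ Sum.inl) ∈ V₁ ∧ (β ∘ Sum.inr) ∈ V₂} := by
      apply hball
      rw [Metric.mem_ball, dist_pi_lt_iff hε]
      intro i
      cases i with
      | inl a => simpa using hε
      | inr b =>
        exact lt_of_le_of_lt (dist_le_pi_dist y (w ∘ Sum.inr) b) hy
    have := hmem.2
    rwa [Sum.elim_comp_inr] at this

lemma vor_strict_contradiction {M : Matrix ι ι ℝ} (hM : M.PosDef) {u u' : ι → ℝ}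
    (hu : u ∈ interior (VorMatrix M)) (hu' : u' ∈ interior (VorMatrix M))
    {m : ι → ℤ} (hm : m ≠ 0) (hsub : u - u' = icast m) : False := by
  have h1 := vor_interior_strict hM hu hm
  have h2 := vor_interior_strict hM hu' (neg_ne_zero.2 hm)
  rw [icast_neg] at h2
  simp only [neg_dotProduct, Matrix.mulVec_neg, dotProduct_neg, neg_neg] at h2
  have h3 : icast m ⬝ᵥ M.mulVec u - icast m ⬝ᵥ M.mulVec u'
      = icast m ⬝ᵥ M.mulVec (icast m) := by
    rw [← dotProduct_sub, ← Matrix.mulVec_sub, hsub]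
  linarith

end VorAux

open VorAux

/-- With `g = r + s` (so `0 ≤ r ≤ g`, `s = g - r`), `A = [[A₀,0],[0,0]]` with
`A₀` positive definite `r×r`, and `Z` a real `g×g` matrix whose lower-right `s×s` block is
positive definite, the set `V = Vor(A₀) × Vor(Z₂₂) ⊆ ℝ^r × ℝ^s = ℝ^g` is a fundamental
domain for `ℤ^g` in `ℝ^g`, and `I_V(A) = I(A₀)`, `I_V(Z) = I_{Vor(A₀)}(Z₁₁) + I(Z₂₂)`. -/
theorem momentOn_block_fundamental_domain (r s : ℕ)
    (A₀ : Matrix (Fin r) (Fin r) ℝ) (hA₀ : A₀.PosDef)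
    (Z : Matrix (Fin r ⊕ Fin s) (Fin r ⊕ Fin s) ℝ) (hZ : Z.toBlocks₂₂.PosDef) :
    (∀ x : Fin r ⊕ Fin s → ℝ,
      ∃ w ∈ {β : Fin r ⊕ Fin s → ℝ | (β ∘ Sum.inl) ∈ VorMatrix A₀ ∧
              (β ∘ Sum.inr) ∈ VorMatrix Z.toBlocks₂₂},
        ∃ n : Fin r ⊕ Fin s → ℤ, x = w + fun i => (n i : ℝ)) ∧
    (∀ w ∈ interior {β : Fin r ⊕ Fin s → ℝ | (β ∘ Sum.inl) ∈ VorMatrix A₀ ∧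
              (β ∘ Sum.inr) ∈ VorMatrix Z.toBlocks₂₂},
      ∀ w' ∈ interior {β : Fin r ⊕ Fin s → ℝ | (β ∘ Sum.inl) ∈ VorMatrix A₀ ∧
              (β ∘ Sum.inr) ∈ VorMatrix Z.toBlocks₂₂},
        (∃ n : Fin r ⊕ Fin s → ℤ, w - w' = fun i => (n i : ℝ)) → w = w') ∧
    momentOn {β : Fin r ⊕ Fin s → ℝ | (β ∘ Sum.inl) ∈ VorMatrix A₀ ∧
        (β ∘ Sum.inr) ∈ VorMatrix Z.toBlocks₂₂} (Matrix.fromBlocks A₀ 0 0 0) =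
      momentOn (VorMatrix A₀) A₀ ∧
    momentOn {β : Fin r ⊕ Fin s → ℝ | (β ∘ Sum.inl) ∈ VorMatrix A₀ ∧
        (β ∘ Sum.inr) ∈ VorMatrix Z.toBlocks₂₂} Z =
      momentOn (VorMatrix A₀) Z.toBlocks₁₁ + momentOn (VorMatrix Z.toBlocks₂₂) Z.toBlocks₂₂ := by
  classical
  have h1c := vor_isCompact hA₀
  have h2c := vor_isCompact hZ
  have h1m := (vor_isClosed A₀).measurableSet
  have h2m := (vor_isClosed Z.toBlocks₂₂).measurableSet
  have h1s : ∀ x ∈ VorMatrix A₀, -x ∈ VorMatrix A₀ := fun x hx => vor_neg_mem hx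
  have h2s : ∀ x ∈ VorMatrix Z.toBlocks₂₂, -x ∈ VorMatrix Z.toBlocks₂₂ :=
    fun x hx => vor_neg_mem hx
  have h1v := vor_volume hA₀
  have h2v := vor_volume hZ
  refine ⟨?_, ?_, ?_, ?_⟩
  · intro x
    obtain ⟨n₁, hn1⟩ := exists_sub_mem_vor hA₀ (x ∘ Sum.inl)
    obtain ⟨n₂, hn2⟩ := exists_sub_mem_vor hZ (x ∘ Sum.inr)
    refine ⟨Sum.elim (x ∘ Sum.inl - icast n₁) (x ∘ Sum.inr - icast n₂), ⟨?_, ?_⟩,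
      Sum.elim n₁ n₂, ?_⟩
    · rw [Sum.elim_comp_inl]; exact hn1
    · rw [Sum.elim_comp_inr]; exact hn2
    · funext i
      cases i with
      | inl a => simp [icast]
      | inr b => simp [icast]
  · rintro w hw w' hw' ⟨n, hn⟩
    by_contra hne
    have hn0 : n ≠ 0 := by
      intro h0
      apply hne
      have : w - w' = 0 := by
        rw [hn, h0]; funext i; simp
      rw [← sub_eq_zero]; exact this
    obtain ⟨i, hi⟩ : ∃ i, n i ≠ 0 := by
      by_contra h
      push_neg at h
      exact hn0 (funext h)
    cases i with
    | inl a =>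
      refine vor_strict_contradiction hA₀ (interior_prod_proj hw).1
        (interior_prod_proj hw').1 (m := n ∘ Sum.inl) ?_ ?_
      · intro h0; exact hi (congrFun h0 a)
      · funext b
        exact congrFun hn (Sum.inl b)
    | inr a =>
      refine vor_strict_contradiction hZ (interior_prod_proj hw).2
        (interior_prod_proj hw').2 (m := n ∘ Sum.inr) ?_ ?_
      · intro h0; exact hi (congrFun h0 a)
      · funext b
        exact congrFun hn (Sum.inr b)
  · rw [momentOn_prod _ _ h1c h2c h1m h2m h1s h2s h1v h2v]
    rw [Matrix.toBlocks_fromBlocks₁₁, Matrix.toBlocks_fromBlocks₂₂]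
    have : momentOn (VorMatrix Z.toBlocks₂₂) (0 : Matrix (Fin s) (Fin s) ℝ) = 0 := by
      simp [momentOn, Matrix.zero_mulVec, dotProduct_zero]
    rw [this, add_zero]
  · exact momentOn_prod _ _ h1c h2c h1m h2m h1s h2s h1v h2v Z
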